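/- For 0 < a ≤ 1 and z ≥ 0, the upper incomplete Gamma function satisfies Γ(a,z) ≤ Γ(a)·(1 − (1 − e^{−z})^a) ≤ Γ(a)·e^{−z}. -/

import Mathlib

open MeasureTheory Real Filter ProbabilityTheory

/-- Upper incomplete Gamma function `Γ(a,x) = ∫_x^∞ e^{-t} t^{a-1} dt`. -/
noncomputable def upperGamma (a x : ℝ) : ℝ := ∫ t in Set.Ioi x, Real.exp (-t) * t ^ (a - 1)

/-- Regularized upper incomplete Gamma function `Q(a,x) = Γ(a,x)/Γ(a)`. -/
noncomputable def regQ (a x : ℝ) : ℝ := upperGamma a x / Real.Gamma a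

open Set

lemma aux_gamma_succ_le_one {a : ℝ} (ha : 0 < a) (ha1 : a ≤ 1) : a * Real.Gamma a ≤ 1 := by
  have h1 : a * Real.Gamma a = Real.Gamma (a + 1) := (Real.Gamma_add_one ha.ne').symm
  rw [h1, Real.Gamma_eq_integral (by linarith : (0:ℝ) < a + 1)]
  have hxa : IntegrableOn (fun x : ℝ => Real.exp (-x) * x ^ (a + 1 - 1)) (Ioi 0) :=
    Real.GammaIntegral_convergent (by linarith)
  have hx1 : IntegrableOn (fun x : ℝ => Real.exp (-x) * x) (Ioi 0) := by
    have := Real.GammaIntegral_convergent (by norm_num : (0:ℝ) < 2)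
    refine this.congr_fun ?_ measurableSet_Ioi
    intro x hx
    norm_num [Real.rpow_one]
  have hxe : IntegrableOn (fun x : ℝ => Real.exp (-x)) (Ioi 0) := by
    simpa using exp_neg_integrableOn_Ioi 0 (by norm_num : (0:ℝ) < 1)
  have hint2 : IntegrableOn (fun x : ℝ => a * (Real.exp (-x) * x) + (1 - a) * Real.exp (-x))
      (Ioi 0) := (hx1.const_mul a).add (hxe.const_mul (1 - a))
  have key : (∫ x in Ioi (0:ℝ), Real.exp (-x) * x ^ (a + 1 - 1)) ≤
      ∫ x in Ioi (0:ℝ), (a * (Real.exp (-x) * x) + (1 - a) * Real.exp (-x)) := by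
    refine setIntegral_mono_on hxa hint2 measurableSet_Ioi ?_
    intro x hx
    have hx0 : (0:ℝ) < x := hx
    have hgm : x ^ a * (1:ℝ) ^ (1 - a) ≤ a * x + (1 - a) * 1 :=
      Real.geom_mean_le_arith_mean2_weighted ha.le (by linarith) hx0.le zero_le_one
        (by ring)
    rw [Real.one_rpow, mul_one, mul_one] at hgm
    have : x ^ (a + 1 - 1) = x ^ a := by norm_num
    rw [this]
    have he : (0:ℝ) < Real.exp (-x) := Real.exp_pos _
    nlinarith [Real.exp_pos (-x)]
  have hval : (∫ x in Ioi (0:ℝ), (a * (Real.exp (-x) * x) + (1 - a) * Real.exp (-x))) = 1 := by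
    rw [integral_add (hx1.const_mul a) (hxe.const_mul (1 - a)), integral_const_mul,
      integral_const_mul]
    have h2 : (∫ x in Ioi (0:ℝ), Real.exp (-x) * x) = 1 := by
      have h3 := Real.Gamma_eq_integral (by norm_num : (0:ℝ) < 2)
      rw [Real.Gamma_two] at h3
      rw [show (∫ x in Ioi (0:ℝ), Real.exp (-x) * x)
          = ∫ x in Ioi (0:ℝ), Real.exp (-x) * x ^ ((2:ℝ) - 1) from
        setIntegral_congr_fun measurableSet_Ioi (fun x hx => by norm_num [Real.rpow_one])]
      exact h3.symm
    rw [h2, integral_exp_neg_Ioi_zero]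
    ring
  linarith [key, hval.le]


lemma upperGamma_add_lower {a : ℝ} (ha : 0 < a) {y : ℝ} (hy : 0 ≤ y) :
    (∫ t in (0:ℝ)..y, Real.exp (-t) * t ^ (a - 1)) + upperGamma a y = Real.Gamma a := by
  rw [intervalIntegral.integral_of_le hy, upperGamma, Real.Gamma_eq_integral ha]
  have hInt := Real.GammaIntegral_convergent ha
  rw [← setIntegral_union (Ioc_disjoint_Ioi le_rfl) measurableSet_Ioi
    (hInt.mono_set Ioc_subset_Ioi_self) (hInt.mono_set (Ioi_subset_Ioi hy)),
    Ioc_union_Ioi_eq_Ioi hy]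

lemma main1 {a z : ℝ} (ha : 0 < a) (ha1 : a ≤ 1) (hz : 0 ≤ z) :
    upperGamma a z ≤ Real.Gamma a * (1 - (1 - Real.exp (-z)) ^ a) := by
  set G := Real.Gamma a with hGdef
  have hGpos : 0 < G := Real.Gamma_pos_of_pos ha
  set f : ℝ → ℝ := fun t => Real.exp (-t) * t ^ (a - 1) with hfdef
  set F : ℝ → ℝ := fun y => ∫ t in (0:ℝ)..y, f t with hFdef
  set g : ℝ → ℝ := fun y => F y - G * (1 - Real.exp (-y)) ^ a with hgdef
  have hiden : ∀ y, 0 ≤ y → F y + upperGamma a y = G := fun y hy =>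
    upperGamma_add_lower ha hy
  -- reduce to 0 ≤ g z
  suffices hkey : 0 ≤ g z by
    have hid := hiden z hz
    have : g z = F z - G * (1 - Real.exp (-z)) ^ a := rfl
    rw [mul_sub, mul_one]
    linarith [hkey]
  -- basic facts
  have hInt := Real.GammaIntegral_convergent ha
  have hfca : ∀ x : ℝ, 0 < x → ContinuousAt f x := by
    intro x hx
    exact (Real.continuous_exp.comp continuous_neg).continuousAt.mul
      (Real.continuousAt_rpow_const x (a - 1) (Or.inl (ne_of_gt hx)))
  have hfc : ContinuousOn f (Ioi 0) := fun x hx => (hfca x hx).continuousWithinAt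
  have hII : ∀ x : ℝ, 0 ≤ x → IntervalIntegrable f volume 0 x := by
    intro x hx
    rw [intervalIntegrable_iff_integrableOn_Ioc_of_le hx]
    exact hInt.mono_set Ioc_subset_Ioi_self
  have hFd : ∀ x : ℝ, 0 < x → HasDerivAt F (f x) x := fun x hx =>
    intervalIntegral.integral_hasDerivAt_right (hII x hx.le)
      (hfc.stronglyMeasurableAtFilter isOpen_Ioi x hx) (hfca x hx)
  have hu0 : ∀ x : ℝ, 0 < x → 0 < 1 - Real.exp (-x) := by
    intro x hx
    have : Real.exp (-x) < Real.exp 0 := Real.exp_lt_exp.mpr (by linarith)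
    rw [Real.exp_zero] at this
    linarith
  have hud : ∀ x : ℝ, HasDerivAt (fun y : ℝ => 1 - Real.exp (-y)) (Real.exp (-x)) x := by
    intro x
    have h1 : HasDerivAt (fun y : ℝ => Real.exp (-y)) (-Real.exp (-x)) x := by
      have h0 := (Real.hasDerivAt_exp (-x)).comp x (hasDerivAt_neg x)
      simp only [mul_neg, mul_one] at h0
      exact h0
    simpa using h1.const_sub 1
  have hgd : ∀ x : ℝ, 0 < x → HasDerivAt g
      (f x - Real.exp (-x) * ((a * G) * (1 - Real.exp (-x)) ^ (a - 1))) x := by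
    intro x hx
    have h2 : HasDerivAt (fun y : ℝ => (1 - Real.exp (-y)) ^ a)
        (Real.exp (-x) * a * (1 - Real.exp (-x)) ^ (a - 1)) x :=
      (hud x).rpow_const (Or.inl (ne_of_gt (hu0 x hx)))
    have h3 := (hFd x hx).sub (h2.const_mul G)
    refine h3.congr_deriv ?_
    ring
  -- the auxiliary convex function
  set L := a * G with hLdef
  have hL0 : 0 < L := mul_pos ha hGpos
  have hL1 : L ≤ 1 := aux_gamma_succ_le_one ha ha1
  set K := L ^ (a - 1)⁻¹ with hKdef
  have hK0 : 0 < K := Real.rpow_pos_of_pos hL0 _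
  have hK1 : (1:ℝ) ≤ K :=
    Real.one_le_rpow_of_pos_of_le_one_of_nonpos hL0 hL1
      (inv_nonpos.mpr (by linarith))
  have hKL : K ^ (a - 1) = L := by
    rcases eq_or_lt_of_le ha1 with h1 | h1
    · rw [hKdef, h1]
      norm_num
      rw [hLdef, hGdef, h1, Real.Gamma_one]
      norm_num
    · exact Real.rpow_inv_rpow hL0.le (sub_ne_zero.mpr (ne_of_lt h1))
  set h : ℝ → ℝ := fun y => K * Real.exp (-y) + (y - K) with hhdef
  have hh0 : h 0 = 0 := by simp [hhdef]
  have hconv : ConvexOn ℝ univ h := by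
    have h1 : ConvexOn ℝ univ (fun y : ℝ => Real.exp (-y)) := by
      have := convexOn_exp.comp_affineMap (LinearMap.toAffineMap (-(LinearMap.id : ℝ →ₗ[ℝ] ℝ)))
      simpa [Function.comp_def] using this
    refine ⟨convex_univ, fun x _ y _ c d hc hd hcd => ?_⟩
    have h2 := (h1.smul hK0.le).2 (mem_univ x) (mem_univ y) hc hd hcd
    simp only [smul_eq_mul] at h2 ⊢
    have hhx : h (c * x + d * y) = K * Real.exp (-(c * x + d * y)) + (c * x + d * y - K) := rfl
    have hhy : h x = K * Real.exp (-x) + (x - K) := rfl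
    have hhz : h y = K * Real.exp (-y) + (y - K) := rfl
    rw [hhx, hhy, hhz]
    nlinarith [h2]
  -- derivative sign analysis helpers
  have hderiv_nonneg : ∀ x : ℝ, 0 < x → x ≤ K * (1 - Real.exp (-x)) →
      0 ≤ f x - Real.exp (-x) * (L * (1 - Real.exp (-x)) ^ (a - 1)) := by
    intro x hx hxle
    have hu := hu0 x hx
    have hrp : (K * (1 - Real.exp (-x))) ^ (a - 1) ≤ x ^ (a - 1) :=
      Real.rpow_le_rpow_of_nonpos hx hxle (by linarith)
    rw [Real.mul_rpow hK0.le hu.le, hKL] at hrp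
    have he := Real.exp_pos (-x)
    have : Real.exp (-x) * (L * (1 - Real.exp (-x)) ^ (a - 1)) ≤ Real.exp (-x) * x ^ (a - 1) :=
      mul_le_mul_of_nonneg_left hrp he.le
    simp only [hfdef]
    linarith
  have hderiv_nonpos : ∀ x : ℝ, 0 < x → K * (1 - Real.exp (-x)) ≤ x →
      f x - Real.exp (-x) * (L * (1 - Real.exp (-x)) ^ (a - 1)) ≤ 0 := by
    intro x hx hxge
    have hu := hu0 x hx
    have hKu : 0 < K * (1 - Real.exp (-x)) := mul_pos hK0 hu
    have hrp : x ^ (a - 1) ≤ (K * (1 - Real.exp (-x))) ^ (a - 1) :=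
      Real.rpow_le_rpow_of_nonpos hKu hxge (by linarith)
    rw [Real.mul_rpow hK0.le hu.le, hKL] at hrp
    have he := Real.exp_pos (-x)
    have : Real.exp (-x) * x ^ (a - 1) ≤ Real.exp (-x) * (L * (1 - Real.exp (-x)) ^ (a - 1)) :=
      mul_le_mul_of_nonneg_left hrp he.le
    simp only [hfdef]
    linarith
  have hg0 : g 0 = 0 := by
    simp [hgdef, hFdef, Real.zero_rpow ha.ne']
  rcases eq_or_lt_of_le hz with hz0 | hz0
  · rw [← hz0, hg0]
  -- z > 0
  by_cases hcase : h z ≤ 0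
  · -- monotone on [0, z]
    have hmono : MonotoneOn g (Icc 0 z) := by
      apply monotoneOn_of_deriv_nonneg (convex_Icc 0 z)
      · -- continuity
        apply ContinuousOn.sub
        · have hIcc : IntegrableOn f (Icc 0 z) := by
            rw [integrableOn_Icc_iff_integrableOn_Ioc]
            exact hInt.mono_set Ioc_subset_Ioi_self
          refine (intervalIntegral.continuousOn_primitive hIcc).congr fun x hx => ?_
          simp only [hFdef]
          rw [intervalIntegral.integral_of_le hx.1]
        · exact (continuous_const.mul
            ((continuous_const.sub (Real.continuous_exp.comp continuous_neg)).rpow_const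
              (fun x => Or.inr ha.le))).continuousOn
      · intro x hx
        rw [interior_Icc] at hx
        exact (hgd x hx.1).differentiableAt.differentiableWithinAt
      · intro x hx
        rw [interior_Icc] at hx
        rw [(hgd x hx.1).deriv]
        have hmax := hconv.le_max_of_mem_Icc (mem_univ 0) (mem_univ z) ⟨hx.1.le, hx.2.le⟩
        rw [hh0] at hmax
        have hhx : h x ≤ 0 := le_trans hmax (by simp [hcase])
        have hxle : x ≤ K * (1 - Real.exp (-x)) := by
          have : K * Real.exp (-x) + (x - K) ≤ 0 := hhx
          nlinarith
        exact hderiv_nonneg x hx.1 hxle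
    have := hmono (left_mem_Icc.mpr hz0.le) (right_mem_Icc.mpr hz0.le) hz0.le
    linarith [hg0]
  · -- antitone on [z, ∞), use limit at infinity
    push_neg at hcase
    have hanti : AntitoneOn g (Ici z) := by
      apply antitoneOn_of_deriv_nonpos (convex_Ici z)
      · exact fun x hx => ((hgd x (lt_of_lt_of_le hz0 hx)).continuousAt).continuousWithinAt
      · intro x hx
        rw [interior_Ici] at hx
        exact (hgd x (hz0.trans hx)).differentiableAt.differentiableWithinAt
      · intro x hx
        rw [interior_Ici] at hx
        have hxz : z < x := hx
        have hxpos : 0 < x := hz0.trans hxz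
        -- show h x > 0 by convexity slope argument
        have hslope := hconv.slope_mono_adjacent (mem_univ 0) (mem_univ x) hz0 hxz
        rw [hh0, sub_zero, sub_zero] at hslope
        have h1 : 0 < h z / z := div_pos hcase hz0
        have h2 : 0 < (h x - h z) / (x - z) := lt_of_lt_of_le h1 hslope
        have h3 : 0 < h x - h z := by
          by_contra hcon
          push_neg at hcon
          have : (h x - h z) / (x - z) ≤ 0 :=
            div_nonpos_of_nonpos_of_nonneg hcon (by linarith)
          linarith
        have hhx : 0 < h x := by linarith
        have hxge : K * (1 - Real.exp (-x)) ≤ x := by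
          have : 0 < K * Real.exp (-x) + (x - K) := hhx
          nlinarith
        rw [(hgd x hxpos).deriv]
        exact hderiv_nonpos x hxpos hxge
    -- tendsto g atTop 0
    have hUt : Tendsto (fun y => upperGamma a y) atTop (nhds 0) := by
      have hub : ∀ᶠ y in atTop, upperGamma a y ≤ Real.exp (-y) := by
        filter_upwards [eventually_ge_atTop (1:ℝ)] with y hy
        have hint1 : IntegrableOn f (Ioi y) := hInt.mono_set (Ioi_subset_Ioi (by linarith))
        have hint2 : IntegrableOn (fun t => Real.exp (-t)) (Ioi y) :=
          (exp_neg_integrableOn_Ioi y one_pos).congr_fun (fun x _ => by norm_num)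
            measurableSet_Ioi
        calc upperGamma a y ≤ ∫ t in Ioi y, Real.exp (-t) := by
              refine setIntegral_mono_on hint1 hint2 measurableSet_Ioi fun t ht => ?_
              have ht1 : (1:ℝ) ≤ t := by linarith [mem_Ioi.mp ht]
              have h1 : t ^ (a - 1) ≤ 1 :=
                Real.rpow_le_one_of_one_le_of_nonpos ht1 (by linarith)
              have he := Real.exp_pos (-t)
              show Real.exp (-t) * t ^ (a - 1) ≤ Real.exp (-t)
              nlinarith
          _ = Real.exp (-y) := integral_exp_neg_Ioi y
      have hlb : ∀ᶠ y in atTop, 0 ≤ upperGamma a y := by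
        filter_upwards [eventually_ge_atTop (0:ℝ)] with y hy
        apply setIntegral_nonneg measurableSet_Ioi
        intro t ht
        have : (0:ℝ) < t := lt_of_le_of_lt hy (mem_Ioi.mp ht)
        positivity
      exact tendsto_of_tendsto_of_tendsto_of_le_of_le' tendsto_const_nhds
        Real.tendsto_exp_neg_atTop_nhds_zero hlb hub
    have hFt : Tendsto F atTop (nhds G) := by
      have heq : (fun y => G - upperGamma a y) =ᶠ[atTop] F := by
        filter_upwards [eventually_ge_atTop (0:ℝ)] with y hy
        have := hiden y hy
        linarith
      exact Tendsto.congr' heq (by simpa using tendsto_const_nhds.sub hUt)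
    have hut : Tendsto (fun y => G * (1 - Real.exp (-y)) ^ a) atTop (nhds G) := by
      have h1 : Tendsto (fun y : ℝ => 1 - Real.exp (-y)) atTop (nhds 1) := by
        simpa using tendsto_const_nhds.sub Real.tendsto_exp_neg_atTop_nhds_zero
      have h2 : ContinuousAt (fun x : ℝ => x ^ a) 1 :=
        Real.continuousAt_rpow_const 1 a (Or.inl one_ne_zero)
      have h3 := h2.tendsto.comp h1
      rw [Real.one_rpow] at h3
      simpa using tendsto_const_nhds.mul h3
    have hgt : Tendsto g atTop (nhds 0) := by
      have := hFt.sub hut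
      simpa using this
    have hev : ∀ᶠ t in atTop, g t ≤ g z := by
      filter_upwards [eventually_ge_atTop z] with t ht
      exact hanti self_mem_Ici ht ht
    exact le_of_tendsto hgt hev

theorem stmt3 (a z : ℝ) (ha : 0 < a) (ha1 : a ≤ 1) (hz : 0 ≤ z) :
    upperGamma a z ≤ Real.Gamma a * (1 - (1 - Real.exp (-z)) ^ a) ∧
      Real.Gamma a * (1 - (1 - Real.exp (-z)) ^ a) ≤ Real.Gamma a * Real.exp (-z) := by
  refine ⟨main1 ha ha1 hz, ?_⟩
  have hG : 0 ≤ Real.Gamma a := (Real.Gamma_pos_of_pos ha).le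
  have hu0 : 0 ≤ 1 - Real.exp (-z) := by
    have : Real.exp (-z) ≤ Real.exp 0 := Real.exp_le_exp.mpr (by linarith)
    rw [Real.exp_zero] at this
    linarith
  have hkey : 1 - (1 - Real.exp (-z)) ^ a ≤ Real.exp (-z) := by
    rcases eq_or_lt_of_le hu0 with h0 | h0
    · rw [← h0, Real.zero_rpow ha.ne']
      linarith
    · have h1 : 1 - Real.exp (-z) ≤ 1 := by
        have := Real.exp_pos (-z)
        linarith
      have h2 : (1 - Real.exp (-z)) ^ (1:ℝ) ≤ (1 - Real.exp (-z)) ^ a :=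
        Real.rpow_le_rpow_of_exponent_ge h0 h1 ha1
      rw [Real.rpow_one] at h2
      linarith
  exact mul_le_mul_of_nonneg_left hkey hG
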